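/- For every λ ≥ 0, the series ∑_{n=1}^∞ λ^{n-1} / Γ((n+1)/2) converges and equals 2 e^{λ²} ∫_{-∞}^{√2 λ} (1/√(2π)) e^{-y²/2} dy. -/

import Mathlib

open MeasureTheory Real


lemma binom_sum_inv (k : ℕ) : ∀ x : ℝ, 0 < x →
    ∑ j ∈ Finset.range (k+1), (-1:ℝ)^j * (k.choose j) / (x + j)
      = (k.factorial : ℝ) / ∏ i ∈ Finset.range (k+1), (x + i) := by
  induction k with
  | zero => intro x hx; simp
  | succ k ih =>
    intro x hx
    have hx1 : (0:ℝ) < x + 1 := by linarith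
    have hP : ∀ y : ℝ, 0 < y → (0:ℝ) < ∏ i ∈ Finset.range (k+1), (y + i) := by
      intro y hy
      exact Finset.prod_pos fun i _ => by positivity
    have split : ∑ j ∈ Finset.range (k+2), (-1:ℝ)^j * ((k+1).choose j) / (x + j)
        = (∑ j ∈ Finset.range (k+1), (-1:ℝ)^j * (k.choose j) / (x + j))
          - ∑ j ∈ Finset.range (k+1), (-1:ℝ)^j * (k.choose j) / ((x+1) + j) := by
      rw [Finset.sum_range_succ' _ (k+1)]
      push_cast
      have expand : ∀ j ∈ Finset.range (k+1),
          (-1:ℝ)^(j+1) * ((k+1).choose (j+1)) / (x + (j+1))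
          = (-1:ℝ)^(j+1) * (k.choose j) / (x + (j+1))
            + (-1:ℝ)^(j+1) * (k.choose (j+1)) / (x + (j+1)) := by
        intro j _
        rw [Nat.choose_succ_succ]
        push_cast
        ring
      rw [Finset.sum_congr rfl expand, Finset.sum_add_distrib]
      have e1 : ∑ j ∈ Finset.range (k+1), (-1:ℝ)^(j+1) * (k.choose j) / (x + (j+1))
          = - ∑ j ∈ Finset.range (k+1), (-1:ℝ)^j * (k.choose j) / ((x+1) + j) := by
        rw [← Finset.sum_neg_distrib]
        refine Finset.sum_congr rfl fun j _ => ?_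
        push_cast
        ring_nf
      have e2 : (∑ j ∈ Finset.range (k+1), (-1:ℝ)^(j+1) * (k.choose (j+1)) / (x + (j+1)))
            + (-1:ℝ)^0 * ((k+1).choose 0) / (x + 0)
          = ∑ j ∈ Finset.range (k+1), (-1:ℝ)^j * (k.choose j) / (x + j) := by
        rw [Finset.sum_range_succ' (fun j => (-1:ℝ)^j * (k.choose j) / (x + j)) k]
        have : (-1:ℝ)^(k+1) * (k.choose (k+1)) / (x + (k+1)) = 0 := by
          simp [Nat.choose_succ_self]
        rw [Finset.sum_range_succ _ k, this]
        simp
      push_cast at e1 e2 ⊢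
      rw [e1]
      linarith [e2]
    have hQ1 : ∏ i ∈ Finset.range (k+2), (x + (i:ℝ)) =
        (∏ i ∈ Finset.range (k+1), (x + (i:ℝ))) * (x + (k:ℝ) + 1) := by
      rw [Finset.prod_range_succ]; push_cast; ring
    have hQ2 : ∏ i ∈ Finset.range (k+2), (x + (i:ℝ)) =
        x * ∏ i ∈ Finset.range (k+1), ((x+1) + (i:ℝ)) := by
      rw [Finset.prod_range_succ']
      have : ∀ i ∈ Finset.range (k+1), (x + ((i:ℕ)+1:ℕ)) = ((x+1) + (i:ℝ)) := by
        intro i _; push_cast; ring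
      rw [Finset.prod_congr rfl this]
      push_cast; ring
    have key : x * ∏ i ∈ Finset.range (k+1), ((x+1) + (i:ℝ))
        = (∏ i ∈ Finset.range (k+1), (x + (i:ℝ))) * (x + (k:ℝ) + 1) := by
      rw [← hQ2, hQ1]
    have hP1 := (hP x hx).ne'
    have hP2 := (hP (x+1) hx1).ne'
    rw [split, ih x hx, ih (x+1) hx1, hQ1, Nat.factorial_succ]
    have hxk : x + (k:ℝ) + 1 ≠ 0 := by positivity
    field_simp
    push_cast
    linear_combination (k.factorial:ℝ) * key


lemma fact_cast_succ2 (k : ℕ) : ((2*(k+1)+1).factorial : ℝ)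
    = (2*(k:ℝ)+3) * (2*(k:ℝ)+2) * ((2*k+1).factorial) := by
  have h2 : (2*(k+1)+1) = (2*k+1) + 1 + 1 := by ring
  rw [h2, Nat.factorial_succ, Nat.factorial_succ]
  push_cast
  ring

lemma half_prod (k : ℕ) : ∏ i ∈ Finset.range (k+1), ((1:ℝ)/2 + i)
    = ((2*k+1).factorial : ℝ) / (4^k * k.factorial * 2) := by
  induction k with
  | zero => simp
  | succ k ih =>
    rw [Finset.prod_range_succ, ih, fact_cast_succ2,
      show (((k+1).factorial : ℕ) : ℝ) = ((k:ℝ)+1) * k.factorial by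
        rw [Nat.factorial_succ]; push_cast; ring]
    have h2 : (0:ℝ) < 4^k * k.factorial * 2 := by positivity
    have h3 : ((2*k+1).factorial : ℝ) ≠ 0 := by positivity
    push_cast
    field_simp
    ring

lemma binom_sum_half (k : ℕ) :
    ∑ j ∈ Finset.range (k+1), (-1:ℝ)^j * (k.choose j) / (2*j+1)
      = 4^k * (k.factorial:ℝ)^2 / ((2*k+1).factorial) := by
  have h := binom_sum_inv k (1/2) (by norm_num)
  rw [half_prod] at h
  have e : ∀ j ∈ Finset.range (k+1), (-1:ℝ)^j * (k.choose j) / ((1:ℝ)/2 + j)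
      = 2 * ((-1:ℝ)^j * (k.choose j) / (2*j+1)) := by
    intro j _
    have : (2*(j:ℝ)+1) ≠ 0 := by positivity
    field_simp
    ring
  rw [Finset.sum_congr rfl e, ← Finset.mul_sum, div_div_eq_mul_div] at h
  have h4 : ((2*k+1).factorial : ℝ) ≠ 0 := by positivity
  have h5 : (4:ℝ)^k * (k.factorial:ℝ) * 2 ≠ 0 := by positivity
  linear_combination h / 2

lemma gamma_add_three_halves (k : ℕ) :
    Real.Gamma ((k:ℝ) + 3/2) = Real.sqrt π * ((2*k+1).factorial : ℝ) / (4^k * k.factorial * 2) := by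
  induction k with
  | zero =>
    have : ((0:ℕ):ℝ) + 3/2 = 1/2 + 1 := by norm_num
    rw [this, Real.Gamma_add_one (by norm_num), Real.Gamma_one_half_eq]
    norm_num
    ring
  | succ k ih =>
    have h0 : ((k+1:ℕ):ℝ) + 3/2 = ((k:ℝ) + 3/2) + 1 := by push_cast; ring
    have h1 : ((k:ℝ) + 3/2) ≠ 0 := by positivity
    rw [h0, Real.Gamma_add_one h1, ih, fact_cast_succ2,
      show (((k+1).factorial : ℕ) : ℝ) = ((k:ℝ)+1) * k.factorial by
        rw [Nat.factorial_succ]; push_cast; ring]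
    have h3 : (0:ℝ) < 4^k * k.factorial * 2 := by positivity
    push_cast
    field_simp
    ring


lemma hasSum_exp_sq (x : ℝ) : HasSum (fun k : ℕ => x^(2*k) / k.factorial) (Real.exp (x^2)) := by
  have h := NormedSpace.expSeries_div_hasSum_exp (x^2)
  rw [← Real.exp_eq_exp_ℝ] at h
  convert h using 2 with k
  · rfl
  rw [pow_mul]

lemma hasSum_exp_neg_sq (t : ℝ) :
    HasSum (fun k : ℕ => (-1:ℝ)^k * t^(2*k) / k.factorial) (Real.exp (-t^2)) := by
  have h := NormedSpace.expSeries_div_hasSum_exp (-t^2)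
  rw [← Real.exp_eq_exp_ℝ] at h
  convert h using 2 with k
  · rfl
  rw [neg_pow, pow_mul]
  ring

lemma summable_aux (l : ℝ) : Summable (fun k : ℕ => l^(2*k) / k.factorial * l) := by
  apply Summable.mul_right
  have := (hasSum_exp_sq l).summable
  exact this

lemma integral_exp_neg_sq_tsum (l : ℝ) (hl : 0 ≤ l) :
    ∫ t in (0:ℝ)..l, Real.exp (-t^2)
      = ∑' k : ℕ, (-1:ℝ)^k * l^(2*k+1) / ((2*(k:ℝ)+1) * k.factorial) := by
  have key : ∫ t in Set.Ioc (0:ℝ) l, Real.exp (-t^2)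
      = ∑' k : ℕ, ∫ t in Set.Ioc (0:ℝ) l, (-1:ℝ)^k * t^(2*k) / k.factorial := by
    rw [← MeasureTheory.integral_tsum]
    · apply setIntegral_congr_fun measurableSet_Ioc
      intro t _
      exact ((hasSum_exp_neg_sq t).tsum_eq).symm
    · intro k
      exact (Continuous.aestronglyMeasurable (by continuity))
    · -- lintegral bound
      apply ne_top_of_le_ne_top (b := ENNReal.ofReal (∑' k : ℕ, l^(2*k) / k.factorial * l))
        ENNReal.ofReal_ne_top
      have hb : ∀ k : ℕ, (∫⁻ t in Set.Ioc (0:ℝ) l, ‖(-1:ℝ)^k * t^(2*k) / k.factorial‖₊)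
          ≤ ENNReal.ofReal (l^(2*k) / k.factorial * l) := by
        intro k
        have mono : ∀ t ∈ Set.Ioc (0:ℝ) l, (‖(-1:ℝ)^k * t^(2*k) / k.factorial‖₊ : ENNReal)
            ≤ ENNReal.ofReal (l^(2*k) / k.factorial) := by
          intro t ht
          rw [← enorm_eq_nnnorm, ← ofReal_norm]
          apply ENNReal.ofReal_le_ofReal
          rw [norm_div, norm_mul, norm_pow, norm_pow, norm_neg, norm_one, one_pow, one_mul]
          rw [Real.norm_natCast]
          gcongr
          rw [Real.norm_eq_abs, abs_of_pos ht.1]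
          exact ht.2
        calc (∫⁻ t in Set.Ioc (0:ℝ) l, ‖(-1:ℝ)^k * t^(2*k) / k.factorial‖₊)
            ≤ ∫⁻ _ in Set.Ioc (0:ℝ) l, ENNReal.ofReal (l^(2*k) / k.factorial) :=
              setLIntegral_mono' measurableSet_Ioc mono
          _ = ENNReal.ofReal (l^(2*k) / k.factorial) * volume (Set.Ioc (0:ℝ) l) := by
              rw [setLIntegral_const]
          _ ≤ ENNReal.ofReal (l^(2*k) / k.factorial * l) := by
              rw [Real.volume_Ioc, sub_zero, ← ENNReal.ofReal_mul (by positivity)]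
      calc ∑' k : ℕ, (∫⁻ t in Set.Ioc (0:ℝ) l, ‖(-1:ℝ)^k * t^(2*k) / k.factorial‖₊)
          ≤ ∑' k : ℕ, ENNReal.ofReal (l^(2*k) / k.factorial * l) := ENNReal.tsum_le_tsum hb
        _ = ENNReal.ofReal (∑' k : ℕ, l^(2*k) / k.factorial * l) := by
            rw [ENNReal.ofReal_tsum_of_nonneg (fun k => by positivity) (summable_aux l)]
  rw [intervalIntegral.integral_of_le hl, key]
  congr 1
  funext k
  have : ∫ t in Set.Ioc (0:ℝ) l, (-1:ℝ)^k * t^(2*k) / k.factorial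
      = ∫ t in (0:ℝ)..l, (-1:ℝ)^k * t^(2*k) / k.factorial := by
    rw [intervalIntegral.integral_of_le hl]
  rw [this]
  have : ∫ t in (0:ℝ)..l, (-1:ℝ)^k * t^(2*k) / k.factorial
      = ((-1:ℝ)^k / k.factorial) * ∫ t in (0:ℝ)..l, t^(2*k) := by
    rw [← intervalIntegral.integral_const_mul]
    congr 1; funext t; ring
  rw [this, integral_pow]
  have h1 : ((2*k+1:ℕ):ℝ) ≠ 0 := by positivity
  have h2 : ((k.factorial:ℕ):ℝ) ≠ 0 := by positivity
  push_cast at h1 ⊢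
  field_simp
  try ring
  try tauto


lemma cauchy_term_eq (l : ℝ) (n : ℕ) :
    ∑ k ∈ Finset.range (n+1),
        (l^(2*k) / (k.factorial:ℝ)) * ((-1:ℝ)^(n-k) * l^(2*(n-k)+1) / ((2*((n-k:ℕ):ℝ)+1) * (n-k).factorial))
      = l^(2*n+1) * (4^n * (n.factorial:ℝ) / ((2*n+1).factorial)) := by
  rw [← Finset.sum_range_reflect]
  simp only [Nat.add_sub_cancel]
  have congr1 : ∀ j ∈ Finset.range (n+1),
      (l^(2*(n-j)) / ((n-j).factorial:ℝ))
          * ((-1:ℝ)^(n-(n-j)) * l^(2*(n-(n-j))+1) / ((2*((n-(n-j):ℕ):ℝ)+1) * (n-(n-j)).factorial))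
        = l^(2*n+1) / (n.factorial:ℝ) * ((-1:ℝ)^j * (n.choose j) / (2*(j:ℝ)+1)) := by
    intro j hj
    have hjn : j ≤ n := Nat.lt_succ_iff.mp (Finset.mem_range.mp hj)
    rw [Nat.sub_sub_self hjn]
    have hpow : l^(2*(n-j)) * l^(2*j+1) = l^(2*n+1) := by
      rw [← pow_add]; congr 1; omega
    have hch : ((n.choose j : ℕ):ℝ) * (j.factorial:ℝ) * ((n-j).factorial:ℝ) = (n.factorial:ℝ) := by
      exact_mod_cast congrArg (Nat.cast : ℕ → ℝ) (Nat.choose_mul_factorial_mul_factorial hjn)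
    have d1 : ((n-j).factorial:ℝ) ≠ 0 := by positivity
    have d2 : ((j.factorial:ℕ):ℝ) ≠ 0 := by positivity
    have d3 : (2*(j:ℝ)+1) ≠ 0 := by positivity
    have d4 : ((n.factorial:ℕ):ℝ) ≠ 0 := by positivity
    field_simp
    rw [← hch]
    linear_combination (((n.choose j:ℕ):ℝ) * (j.factorial:ℝ) * ((n-j).factorial:ℝ)) * hpow
  rw [Finset.sum_congr rfl congr1, ← Finset.mul_sum, binom_sum_half]
  have d4 : ((n.factorial:ℕ):ℝ) ≠ 0 := by positivity
  have d5 : (((2*n+1).factorial:ℕ):ℝ) ≠ 0 := by positivity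
  field_simp


lemma gaussian_Iic_eq (l : ℝ) :
    ∫ y in Set.Iic (Real.sqrt 2 * l), (Real.sqrt (2 * π))⁻¹ * Real.exp (-y ^ 2 / 2)
      = 1/2 + (Real.sqrt π)⁻¹ * ∫ t in (0:ℝ)..l, Real.exp (-t^2) := by
  have hint : Integrable (fun y : ℝ => Real.exp (-(1/2 : ℝ) * y^2)) :=
    integrable_exp_neg_mul_sq (by norm_num)
  have hform : ∀ y : ℝ, Real.exp (-y^2/2) = Real.exp (-(1/2 : ℝ) * y^2) := by
    intro y; congr 1; ring
  -- pull out the constant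
  rw [MeasureTheory.integral_const_mul]
  have hsplit : ∫ y in Set.Iic (Real.sqrt 2 * l), Real.exp (-(1/2:ℝ) * y^2)
      = (∫ y in Set.Iic (0:ℝ), Real.exp (-(1/2:ℝ) * y^2))
        + ∫ y in (0:ℝ)..(Real.sqrt 2 * l), Real.exp (-(1/2:ℝ) * y^2) := by
    rw [← intervalIntegral.integral_Iic_sub_Iic hint.integrableOn hint.integrableOn]
    ring
  have hIic0 : ∫ y in Set.Iic (0:ℝ), Real.exp (-(1/2:ℝ) * y^2) = Real.sqrt (2*π) / 2 := by
    have hneg : ∫ y in Set.Iic (0:ℝ), Real.exp (-(1/2:ℝ) * y^2)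
        = ∫ y in Set.Ioi (0:ℝ), Real.exp (-(1/2:ℝ) * y^2) := by
      rw [← neg_zero, ← integral_comp_neg_Iic]
      simp_rw [neg_zero, neg_sq]
    rw [hneg, integral_gaussian_Ioi]
    rw [show π / (1/2 : ℝ) = 2 * π by ring]
  have hsub : ∫ y in (0:ℝ)..(Real.sqrt 2 * l), Real.exp (-(1/2:ℝ) * y^2)
      = Real.sqrt 2 * ∫ t in (0:ℝ)..l, Real.exp (-t^2) := by
    have h2 : Real.sqrt 2 ≠ 0 := by positivity
    have := intervalIntegral.smul_integral_comp_mul_left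
      (f := fun y => Real.exp (-(1/2:ℝ) * y^2)) (a := (0:ℝ)) (b := l) (Real.sqrt 2)
    rw [mul_zero] at this
    rw [← this]
    rw [smul_eq_mul]
    congr 1
    apply intervalIntegral.integral_congr
    intro t _
    have hsq : (Real.sqrt 2 * t)^2 = 2 * t^2 := by
      rw [mul_pow, Real.sq_sqrt (by norm_num : (0:ℝ) ≤ 2)]
    show Real.exp (-(1/2:ℝ) * (Real.sqrt 2 * t)^2) = Real.exp (-t^2)
    rw [hsq]
    congr 1
    ring
  simp_rw [hform]
  rw [hsplit, hIic0, hsub]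
  have hpi : Real.sqrt (2*π) = Real.sqrt 2 * Real.sqrt π := Real.sqrt_mul (by norm_num) π
  have h1 : Real.sqrt (2*π) ≠ 0 := by positivity
  have h2 : Real.sqrt π ≠ 0 := by positivity
  have h3 : Real.sqrt 2 ≠ 0 := by positivity
  rw [hpi]
  field_simp

/-- For every `λ ≥ 0`, the series `∑_{n=1}^∞ λ^{n-1}/Γ((n+1)/2)` converges and
equals `2 e^{λ²} ∫_{-∞}^{√2 λ} (1/√(2π)) e^{-y²/2} dy`. -/
theorem series_gamma_gaussian (l : ℝ) (hl : 0 ≤ l) :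
    HasSum (fun n : ℕ => l ^ n / Real.Gamma ((n + 2) / 2))
      (2 * Real.exp (l ^ 2) *
        ∫ y in Set.Iic (Real.sqrt 2 * l),
          (Real.sqrt (2 * π))⁻¹ * Real.exp (-y ^ 2 / 2)) := by
  have hI := integral_exp_neg_sq_tsum l hl
  set I := ∫ t in (0:ℝ)..l, Real.exp (-t^2) with hIdef
  -- summability of the two factor series
  have ha : Summable (fun k : ℕ => ‖l^(2*k) / (k.factorial:ℝ)‖) := by
    apply Summable.congr (hasSum_exp_sq l).summable
    intro k
    rw [Real.norm_eq_abs, abs_of_nonneg (by positivity)]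
  have hb : Summable (fun k : ℕ =>
      ‖(-1:ℝ)^k * l^(2*k+1) / ((2*(k:ℝ)+1) * k.factorial)‖) := by
    apply Summable.of_nonneg_of_le (fun k => norm_nonneg _) _ (summable_aux l)
    intro k
    rw [norm_div, norm_mul, norm_pow, norm_neg, norm_one, one_pow, one_mul]
    rw [Real.norm_eq_abs, abs_of_nonneg (pow_nonneg hl (2*k+1)),
      Real.norm_eq_abs, abs_of_nonneg (by positivity : (0:ℝ) ≤ (2*(k:ℝ)+1) * k.factorial)]
    have hkf : (0:ℝ) < (k.factorial:ℝ) := by positivity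
    have hk0 : (0:ℝ) ≤ (k:ℝ) := by positivity
    calc l^(2*k+1) / ((2*(k:ℝ)+1) * k.factorial)
        ≤ l^(2*k+1) / (k.factorial:ℝ) := by
          gcongr
          nlinarith
      _ = l^(2*k) / (k.factorial:ℝ) * l := by rw [pow_succ]; ring
  have hcauchy := hasSum_sum_range_mul_of_summable_norm ha hb
  rw [(hasSum_exp_sq l).tsum_eq, ← hI] at hcauchy
  have hterm : (fun n : ℕ => ∑ k ∈ Finset.range (n+1),
        (l^(2*k) / (k.factorial:ℝ))
          * ((-1:ℝ)^(n-k) * l^(2*(n-k)+1) / ((2*((n-k:ℕ):ℝ)+1) * (n-k).factorial)))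
      = fun n : ℕ => l^(2*n+1) * (4^n * (n.factorial:ℝ) / ((2*n+1).factorial)) :=
    funext (cauchy_term_eq l)
  rw [hterm] at hcauchy
  have hsqpi : (0:ℝ) < Real.sqrt π := Real.sqrt_pos.mpr Real.pi_pos
  have hodd : HasSum (fun k : ℕ => l^(2*k+1) / Real.Gamma ((k:ℝ)+3/2))
      (2 / Real.sqrt π * (Real.exp (l^2) * I)) := by
    have h := hcauchy.mul_left (2 / Real.sqrt π)
    have heq : (fun n : ℕ => (2 / Real.sqrt π)
          * (l^(2*n+1) * (4^n * (n.factorial:ℝ) / ((2*n+1).factorial))))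
        = fun n : ℕ => l^(2*n+1) / Real.Gamma ((n:ℝ)+3/2) := by
      funext n
      rw [gamma_add_three_halves]
      have d5 : (((2*n+1).factorial:ℕ):ℝ) ≠ 0 := by positivity
      have d6 : ((n.factorial:ℕ):ℝ) ≠ 0 := by positivity
      field_simp
    rw [← heq]
    exact h
  have heven : HasSum (fun k : ℕ => l^(2*k) / (k.factorial:ℝ)) (Real.exp (l^2)) :=
    hasSum_exp_sq l
  have hcomb : HasSum (fun n : ℕ => l ^ n / Real.Gamma (((n:ℝ) + 2) / 2))
      (Real.exp (l^2) + 2 / Real.sqrt π * (Real.exp (l^2) * I)) := by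
    apply HasSum.even_add_odd
    · have e1 : (fun k : ℕ => l^(2*k) / Real.Gamma ((((2*k:ℕ):ℝ) + 2)/2))
          = fun k : ℕ => l^(2*k) / (k.factorial:ℝ) := by
        funext k
        have h1 : ((((2*k:ℕ):ℝ)) + 2)/2 = (k:ℝ) + 1 := by push_cast; ring
        rw [h1, Real.Gamma_nat_eq_factorial]
      exact e1 ▸ heven
    · have e2 : (fun k : ℕ => l^(2*k+1) / Real.Gamma ((((2*k+1:ℕ):ℝ) + 2)/2))
          = fun k : ℕ => l^(2*k+1) / Real.Gamma ((k:ℝ)+3/2) := by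
        funext k
        have h1 : ((((2*k+1:ℕ):ℝ)) + 2)/2 = (k:ℝ) + 3/2 := by push_cast; ring
        rw [h1]
      exact e2 ▸ hodd
  rw [gaussian_Iic_eq l, ← hIdef]
  convert hcomb using 1
  have hpi : Real.sqrt π ≠ 0 := hsqpi.ne'
  field_simp
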